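/- Duality between polynomial approximation and moment matching: for a continuous function φ on a compact interval I and positive integer L, 2·E_L(φ; I) equals the maximum of E_{X~μ1}[φ(X)] − E_{X~μ0}[φ(X)] over pairs of probability distributions μ0, μ1 supported on I whose moments agree up to order L: E_{μ1}[X^l] = E_{μ0}[X^l] for l = 0,1,…,L. -/

import Mathlib

open MeasureTheory Set Pointwise

theorem my_isCompact_convexHull {V : Type*} [NormedAddCommGroup V] [NormedSpace ℝ V]
    [FiniteDimensional ℝ V] {s : Set V} (hs : IsCompact s) : IsCompact (convexHull ℝ s) := by
  rcases s.eq_empty_or_nonempty with rfl | ⟨s₀, hs₀⟩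
  · simp
  set N := Module.finrank ℝ V + 1 with hN
  set Ω : Set ((Fin N → ℝ) × (Fin N → V)) :=
    (stdSimplex ℝ (Fin N)) ×ˢ (Set.univ.pi fun _ : Fin N => s) with hΩdef
  have hΩ : IsCompact Ω := (isCompact_stdSimplex (𝕜 := ℝ) (ι := Fin N)).prod (isCompact_univ_pi fun _ => hs)
  set T : (Fin N → ℝ) × (Fin N → V) → V := fun p => ∑ j : Fin N, p.1 j • p.2 j with hT
  have hTc : Continuous T := by
    apply continuous_finset_sum
    intro j _
    exact ((continuous_apply j).comp continuous_fst).smul ((continuous_apply j).comp continuous_snd)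
  have himg : convexHull ℝ s = T '' Ω := by
    apply Subset.antisymm
    · intro x hx
      obtain ⟨ι, hfin, z, w, hzs, hai, hwpos, hw1, hsum⟩ :=
        eq_pos_convex_span_of_mem_convexHull hx
      have hcard : Fintype.card ι ≤ N := by
        calc Fintype.card ι ≤ Module.finrank ℝ (vectorSpan ℝ (Set.range z)) + 1 :=
              hai.card_le_finrank_succ
          _ ≤ N := by
              have := Submodule.finrank_le (vectorSpan ℝ (Set.range z))
              omega
      let e := Fintype.equivFin ι
      let g : ι → Fin N := fun i => Fin.castLE hcard (e i)
      have hginj : Function.Injective g := fun i j h => e.injective (Fin.castLE_injective hcard h)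
      classical
      let w' : Fin N → ℝ := Function.extend g w (fun _ => 0)
      let z' : Fin N → V := Function.extend g z (fun _ => s₀)
      have hw'g : ∀ i, w' (g i) = w i := fun i => hginj.extend_apply w _ i
      have hz'g : ∀ i, z' (g i) = z i := fun i => hginj.extend_apply z _ i
      have hw'0 : ∀ j, (¬ ∃ i, g i = j) → w' j = 0 := fun j hj => Function.extend_apply' w _ j hj
      have hz'0 : ∀ j, (¬ ∃ i, g i = j) → z' j = s₀ := fun j hj => Function.extend_apply' z _ j hj
      have hsum_eq : ∀ (f : ℝ → V → ℝ) (hf0 : ∀ v, f 0 v = 0),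
          ∑ j : Fin N, f (w' j) (z' j) = ∑ i : ι, f (w i) (z i) := by
        intro f hf0
        have h1 : ∑ i : ι, f (w i) (z i)
            = ∑ j ∈ Finset.univ.map ⟨g, hginj⟩, f (w' j) (z' j) := by
          rw [Finset.sum_map]
          exact Finset.sum_congr rfl fun i _ => by
            simp only [Function.Embedding.coeFn_mk, hw'g, hz'g]
        rw [h1]
        refine (Finset.sum_subset (Finset.subset_univ _) ?_).symm
        intro j _ hj
        have hnr : ¬ ∃ i, g i = j := by
          intro ⟨i, hi⟩
          exact hj (Finset.mem_map.2 ⟨i, Finset.mem_univ i, hi⟩)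
        rw [hw'0 j hnr, hf0]
      have hsum_eqV : ∀ (f : ℝ → V → V) (hf0 : ∀ v, f 0 v = 0),
          ∑ j : Fin N, f (w' j) (z' j) = ∑ i : ι, f (w i) (z i) := by
        intro f hf0
        have h1 : ∑ i : ι, f (w i) (z i)
            = ∑ j ∈ Finset.univ.map ⟨g, hginj⟩, f (w' j) (z' j) := by
          rw [Finset.sum_map]
          exact Finset.sum_congr rfl fun i _ => by
            simp only [Function.Embedding.coeFn_mk, hw'g, hz'g]
        rw [h1]
        refine (Finset.sum_subset (Finset.subset_univ _) ?_).symm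
        intro j _ hj
        have hnr : ¬ ∃ i, g i = j := by
          intro ⟨i, hi⟩
          exact hj (Finset.mem_map.2 ⟨i, Finset.mem_univ i, hi⟩)
        rw [hw'0 j hnr, hf0]
      refine ⟨(w', z'), ⟨⟨?_, ?_⟩, ?_⟩, ?_⟩
      · intro j
        by_cases hj : ∃ i, g i = j
        · obtain ⟨i, rfl⟩ := hj
          show 0 ≤ w' (g i)
          rw [hw'g]
          exact (hwpos i).le
        · show 0 ≤ w' j
          rw [hw'0 j hj]
      · have := hsum_eq (fun c _ => c) (fun _ => rfl)
        simpa [hw1] using this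
      · intro j _
        by_cases hj : ∃ i, g i = j
        · obtain ⟨i, rfl⟩ := hj
          show z' (g i) ∈ s
          rw [hz'g]
          exact hzs ⟨i, rfl⟩
        · show z' j ∈ s
          rw [hz'0 j hj]
          exact hs₀
      · have := hsum_eqV (fun c v => c • v) (fun v => zero_smul ℝ v)
        simpa [hsum] using this
    · rintro x ⟨⟨w, z⟩, ⟨hwΩ, hzΩ⟩, rfl⟩
      exact (convex_convexHull ℝ s).sum_mem (fun j _ => hwΩ.1 j) hwΩ.2
        (fun j _ => subset_convexHull ℝ s (hzΩ j (mem_univ j)))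
  rw [himg]
  exact hΩ.image hTc

lemma my_le_sup {a b : ℝ} (φ : ℝ → ℝ) (hφ : ContinuousOn φ (Set.Icc a b)) (p : Polynomial ℝ)
    {x : ℝ} (hx : x ∈ Set.Icc a b) :
    |p.eval x - φ x| ≤ ⨆ y : Set.Icc a b, |p.eval (y : ℝ) - φ y| := by
  have hbdd : BddAbove (Set.range fun y : Set.Icc a b => |p.eval (y : ℝ) - φ y|) := by
    rw [show (fun y : Set.Icc a b => |p.eval (y : ℝ) - φ y|)
      = (Set.Icc a b).domRestrict (fun t => |p.eval t - φ t|) from rfl, Set.range_domRestrict]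
    exact (isCompact_Icc.image_of_continuousOn
      ((p.continuous.continuousOn.sub hφ).abs)).bddAbove
  exact le_ciSup hbdd (⟨x, hx⟩ : Set.Icc a b)

lemma my_ae_mem {a b : ℝ} (μ : Measure ℝ) (hsupp : μ (Set.Icc a b)ᶜ = 0) :
    ∀ᵐ x ∂μ, x ∈ Set.Icc a b := by
  rw [ae_iff]
  simpa [Set.compl_def] using hsupp

lemma my_integrable {a b : ℝ} (μ : Measure ℝ) [IsProbabilityMeasure μ]
    (hsupp : μ (Set.Icc a b)ᶜ = 0) {f : ℝ → ℝ} (hf : Continuous f) : Integrable f μ := by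
  obtain ⟨C, hC⟩ := isCompact_Icc.exists_bound_of_continuousOn (f := f) hf.continuousOn
  refine Integrable.mono' (integrable_const C) hf.aestronglyMeasurable ?_
  exact (my_ae_mem μ hsupp).mono fun x hx => hC x hx

lemma my_pair_le {a b : ℝ} (hab : a ≤ b) (φ : ℝ → ℝ) (hφ : ContinuousOn φ (Set.Icc a b))
    {L : ℕ} (p : Polynomial ℝ) (hp : p.natDegree ≤ L)
    (μ0 μ1 : Measure ℝ) [IsProbabilityMeasure μ0] [IsProbabilityMeasure μ1]
    (h0 : μ0 (Set.Icc a b)ᶜ = 0) (h1 : μ1 (Set.Icc a b)ᶜ = 0)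
    (hmom : ∀ l : ℕ, l ≤ L → (∫ t, t ^ l ∂μ1) = ∫ t, t ^ l ∂μ0) :
    (∫ t, φ t ∂μ1) - ∫ t, φ t ∂μ0
      ≤ 2 * ⨆ y : Set.Icc a b, |p.eval (y : ℝ) - φ y| := by
  set ψ : ℝ → ℝ := Set.IccExtend hab ((Set.Icc a b).restrict φ) with hψ
  have hψc : Continuous ψ := (continuousOn_iff_continuous_restrict.mp hφ).Icc_extend'
  have hψeq : ∀ x ∈ Set.Icc a b, ψ x = φ x := fun x hx => by
    rw [hψ, Set.IccExtend_of_mem hab _ hx]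
    rfl
  have hφψ : ∀ (μ : Measure ℝ), μ (Set.Icc a b)ᶜ = 0 → ∫ t, φ t ∂μ = ∫ t, ψ t ∂μ := by
    intro μ hs
    exact integral_congr_ae ((my_ae_mem μ hs).mono fun x hx => (hψeq x hx).symm)
  have hpoly : ∀ (μ : Measure ℝ), ∀ (_ : IsProbabilityMeasure μ), μ (Set.Icc a b)ᶜ = 0 →
      ∫ t, p.eval t ∂μ
        = ∑ l ∈ Finset.range (p.natDegree + 1), p.coeff l * ∫ t, t ^ l ∂μ := by
    intro μ hprob hs
    have heq : (fun t => p.eval t)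
        = fun t => ∑ l ∈ Finset.range (p.natDegree + 1), p.coeff l * t ^ l :=
      funext fun t => Polynomial.eval_eq_sum_range t
    rw [heq, integral_finset_sum _
      (fun l _ => (my_integrable μ hs (continuous_pow l)).const_mul _)]
    exact Finset.sum_congr rfl fun l _ => integral_const_mul _ _
  have hpeq : ∫ t, p.eval t ∂μ1 = ∫ t, p.eval t ∂μ0 := by
    rw [hpoly μ1 inferInstance h1, hpoly μ0 inferInstance h0]
    refine Finset.sum_congr rfl fun l hl => ?_
    rw [hmom l (le_trans (Nat.lt_succ_iff.mp (Finset.mem_range.mp hl)) hp)]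
  set e := ⨆ y : Set.Icc a b, |p.eval (y : ℝ) - φ y| with he
  have hbound : ∀ (μ : Measure ℝ), ∀ (_ : IsProbabilityMeasure μ), μ (Set.Icc a b)ᶜ = 0 →
      |∫ t, (ψ t - p.eval t) ∂μ| ≤ e := by
    intro μ hprob hs
    have h := norm_integral_le_of_norm_le_const (μ := μ) (f := fun t => ψ t - p.eval t)
      (C := e) ?_
    · simpa [measure_univ] using h
    · refine (my_ae_mem μ hs).mono fun x hx => ?_
      show ‖ψ x - p.eval x‖ ≤ e
      rw [Real.norm_eq_abs, hψeq x hx, abs_sub_comm]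
      exact my_le_sup φ hφ p hx
  have hint1ψ : Integrable ψ μ1 := my_integrable μ1 h1 hψc
  have hint0ψ : Integrable ψ μ0 := my_integrable μ0 h0 hψc
  have hint1p : Integrable (fun t => p.eval t) μ1 := my_integrable μ1 h1 p.continuous
  have hint0p : Integrable (fun t => p.eval t) μ0 := my_integrable μ0 h0 p.continuous
  have key1 : ∫ t, (ψ t - p.eval t) ∂μ1 = ∫ t, ψ t ∂μ1 - ∫ t, p.eval t ∂μ1 :=
    integral_sub hint1ψ hint1p
  have key0 : ∫ t, (ψ t - p.eval t) ∂μ0 = ∫ t, ψ t ∂μ0 - ∫ t, p.eval t ∂μ0 :=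
    integral_sub hint0ψ hint0p
  have hb1 := hbound μ1 inferInstance h1
  have hb0 := hbound μ0 inferInstance h0
  rw [key1] at hb1
  rw [key0] at hb0
  rw [hφψ μ1 h1, hφψ μ0 h0]
  rw [abs_le] at hb1 hb0
  have := hb1.2
  have := hb0.1
  linarith [hpeq]

lemma my_integral_finset_dirac {ι : Type*} (tF : Finset ι) (w : ι → ℝ) (y : ι → ℝ)
    (hw : ∀ i ∈ tF, 0 ≤ w i) (f : ℝ → ℝ) :
    ∫ t, f t ∂(∑ i ∈ tF, ENNReal.ofReal (w i) • Measure.dirac (y i))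
      = ∑ i ∈ tF, w i * f (y i) := by
  rw [integral_finset_sum_measure]
  · refine Finset.sum_congr rfl fun i hi => ?_
    rw [integral_smul_measure, integral_dirac, ENNReal.toReal_ofReal (hw i hi), smul_eq_mul]
  · intro i hi
    exact ((integrable_const (f (y i))).congr (ae_eq_dirac f).symm).smul_measure
      ENNReal.ofReal_ne_top

lemma my_finset_dirac_prob {ι : Type*} (tF : Finset ι) (w : ι → ℝ) (y : ι → ℝ)
    (hw : ∀ i ∈ tF, 0 ≤ w i) (hw1 : ∑ i ∈ tF, w i = 1) :
    IsProbabilityMeasure (∑ i ∈ tF, ENNReal.ofReal (w i) • Measure.dirac (y i)) := by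
  constructor
  rw [Measure.finset_sum_apply]
  have : ∀ i ∈ tF, (ENNReal.ofReal (w i) • Measure.dirac (y i)) Set.univ
      = ENNReal.ofReal (w i) := by
    intro i hi
    simp [Measure.smul_apply]
  rw [Finset.sum_congr rfl this, ← ENNReal.ofReal_sum_of_nonneg hw, hw1, ENNReal.ofReal_one]

lemma my_finset_dirac_supp {ι : Type*} {a b : ℝ} (tF : Finset ι) (w : ι → ℝ) (y : ι → ℝ)
    (hy : ∀ i ∈ tF, y i ∈ Set.Icc a b) :
    (∑ i ∈ tF, ENNReal.ofReal (w i) • Measure.dirac (y i)) (Set.Icc a b)ᶜ = 0 := by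
  rw [Measure.finset_sum_apply]
  refine Finset.sum_eq_zero fun i hi => ?_
  rw [Measure.smul_apply, Measure.dirac_apply' _ measurableSet_Icc.compl,
    Set.indicator_of_notMem (by simp [hy i hi])]
  simp

lemma my_hull_to_measure {a b : ℝ} {L : ℕ} (ψ : ℝ → ℝ)
    {u : (Fin L → ℝ) × ℝ}
    (hu : u ∈ convexHull ℝ ((fun t : ℝ => ((fun i : Fin L => t ^ ((i : ℕ) + 1), ψ t) :
      (Fin L → ℝ) × ℝ)) '' Set.Icc a b)) :
    ∃ μ : Measure ℝ, IsProbabilityMeasure μ ∧ μ (Set.Icc a b)ᶜ = 0 ∧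
      (∀ j : Fin L, ∫ t, t ^ ((j : ℕ) + 1) ∂μ = u.1 j) ∧
      ∫ t, ψ t ∂μ = u.2 := by
  classical
  set γ : ℝ → (Fin L → ℝ) × ℝ :=
    fun t => ((fun i : Fin L => t ^ ((i : ℕ) + 1), ψ t)) with hγ
  rw [convexHull_eq] at hu
  obtain ⟨ι, tF, w, zV, hw0, hw1, hzs, hcm⟩ := hu
  have hex : ∀ i ∈ tF, ∃ x, x ∈ Set.Icc a b ∧ γ x = zV i := by
    intro i hi
    exact (Set.mem_image _ _ _).mp (hzs i hi)
  set y : ι → ℝ := fun i => if h : i ∈ tF then (hex i h).choose else a with hy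
  have hyI : ∀ i ∈ tF, y i ∈ Set.Icc a b := by
    intro i hi
    rw [hy]
    simp only [dif_pos hi]
    exact (hex i hi).choose_spec.1
  have hyγ : ∀ i ∈ tF, γ (y i) = zV i := by
    intro i hi
    rw [hy]
    simp only [dif_pos hi]
    exact (hex i hi).choose_spec.2
  have hu' : u = ∑ i ∈ tF, w i • zV i := by
    rw [← hcm, Finset.centerMass_eq_of_sum_1 _ _ hw1]
  refine ⟨∑ i ∈ tF, ENNReal.ofReal (w i) • Measure.dirac (y i),
    my_finset_dirac_prob tF w y hw0 hw1, my_finset_dirac_supp tF w y hyI, ?_, ?_⟩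
  · intro j
    rw [my_integral_finset_dirac tF w y hw0, hu']
    have hfst : (∑ i ∈ tF, w i • zV i).1 j = ∑ i ∈ tF, w i * (zV i).1 j := by
      rw [Prod.fst_sum, Finset.sum_apply]
      exact Finset.sum_congr rfl fun i _ => rfl
    rw [hfst]
    refine Finset.sum_congr rfl fun i hi => ?_
    have : (zV i).1 j = (y i) ^ ((j : ℕ) + 1) := by
      rw [← hyγ i hi]
    rw [this]
  · rw [my_integral_finset_dirac tF w y hw0, hu', Prod.snd_sum]
    refine Finset.sum_congr rfl fun i hi => ?_
    have h2 : (w i • zV i).2 = w i * (zV i).2 := rfl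
    rw [h2, ← hyγ i hi]

/-- Duality between best polynomial approximation and moment matching:
2 E_L(φ; [a,b]) is the maximum of E_{μ1}[φ] − E_{μ0}[φ] over pairs of probability
measures on [a,b] whose moments agree up to order L. -/
theorem approx_moment_duality
    (a b : ℝ) (hab : a ≤ b) (φ : ℝ → ℝ)
    (hφ : ContinuousOn φ (Set.Icc a b)) (L : ℕ) :
    IsGreatest
      {x : ℝ | ∃ μ0 μ1 : Measure ℝ,
        IsProbabilityMeasure μ0 ∧ IsProbabilityMeasure μ1 ∧
        μ0 (Set.Icc a b)ᶜ = 0 ∧ μ1 (Set.Icc a b)ᶜ = 0 ∧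
        (∀ l : ℕ, l ≤ L → (∫ t, t ^ l ∂μ1) = ∫ t, t ^ l ∂μ0) ∧
        x = (∫ t, φ t ∂μ1) - ∫ t, φ t ∂μ0}
      (2 * sInf {e : ℝ | ∃ p : Polynomial ℝ, p.natDegree ≤ L ∧
        e = ⨆ x : Set.Icc a b, |Polynomial.eval (x : ℝ) p - φ x|}) := by
  classical
  have hIne : (Set.Icc a b).Nonempty := Set.nonempty_Icc.mpr hab
  haveI : Nonempty (Set.Icc a b) := hIne.to_subtype
  set ψ : ℝ → ℝ := Set.IccExtend hab ((Set.Icc a b).restrict φ) with hψdef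
  have hψc : Continuous ψ := (continuousOn_iff_continuous_restrict.mp hφ).Icc_extend'
  have hψeq : ∀ x ∈ Set.Icc a b, ψ x = φ x := fun x hx => by
    rw [hψdef, Set.IccExtend_of_mem hab _ hx]
    rfl
  set Tset := {e : ℝ | ∃ p : Polynomial ℝ, p.natDegree ≤ L ∧
    e = ⨆ x : Set.Icc a b, |Polynomial.eval (x : ℝ) p - φ x|} with hTset
  have hTne : Tset.Nonempty := ⟨_, 0, by simp, rfl⟩
  have hTnonneg : ∀ e ∈ Tset, 0 ≤ e := by
    rintro e ⟨p, hp, rfl⟩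
    exact Real.iSup_nonneg fun y => abs_nonneg _
  have hTbdd : BddBelow Tset := ⟨0, hTnonneg⟩
  -- upper bound part
  have hub : ∀ x ∈ {x : ℝ | ∃ μ0 μ1 : Measure ℝ,
        IsProbabilityMeasure μ0 ∧ IsProbabilityMeasure μ1 ∧
        μ0 (Set.Icc a b)ᶜ = 0 ∧ μ1 (Set.Icc a b)ᶜ = 0 ∧
        (∀ l : ℕ, l ≤ L → (∫ t, t ^ l ∂μ1) = ∫ t, t ^ l ∂μ0) ∧
        x = (∫ t, φ t ∂μ1) - ∫ t, φ t ∂μ0}, x ≤ 2 * sInf Tset := by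
    rintro x ⟨μ0, μ1, hpm0, hpm1, hs0, hs1, hmom, rfl⟩
    have hhalf : ((∫ t, φ t ∂μ1) - ∫ t, φ t ∂μ0) / 2 ≤ sInf Tset := by
      refine le_csInf hTne ?_
      rintro e ⟨p, hp, rfl⟩
      have := my_pair_le hab φ hφ p hp μ0 μ1 hs0 hs1 hmom
      linarith
    linarith
  -- the geometric setup
  set γ : ℝ → (Fin L → ℝ) × ℝ :=
    fun t => ((fun i : Fin L => t ^ ((i : ℕ) + 1), ψ t)) with hγdef
  have hγc : Continuous γ :=
    (continuous_pi fun i => continuous_pow _).prodMk hψc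
  set K := convexHull ℝ (γ '' Set.Icc a b) with hK
  have hKc : IsCompact K := my_isCompact_convexHull (isCompact_Icc.image hγc)
  have hKconv : Convex ℝ K := convex_convexHull ℝ _
  set SS := (K ×ˢ K) ∩ {q : ((Fin L → ℝ) × ℝ) × ((Fin L → ℝ) × ℝ) | q.1.1 = q.2.1} with hSS
  have hSSc : IsCompact SS := (hKc.prod hKc).inter_right
    (isClosed_eq (continuous_fst.comp continuous_fst) (continuous_fst.comp continuous_snd))
  have hγK : ∀ x ∈ Set.Icc a b, γ x ∈ K := fun x hx =>
    subset_convexHull ℝ _ (mem_image_of_mem γ hx)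
  have hSSne : SS.Nonempty := ⟨(γ a, γ a), ⟨⟨hγK a (left_mem_Icc.mpr hab),
    hγK a (left_mem_Icc.mpr hab)⟩, rfl⟩⟩
  obtain ⟨q₀, hq₀S, hq₀max⟩ := hSSc.exists_isMaxOn hSSne
    (((continuous_snd.comp continuous_fst).sub
      (continuous_snd.comp continuous_snd)).continuousOn)
  set D := q₀.1.2 - q₀.2.2 with hD
  have hmax : ∀ q ∈ SS, q.1.2 - q.2.2 ≤ D := fun q hq => hq₀max hq
  have hD0 : 0 ≤ D := by
    have := hmax (γ a, γ a) ⟨⟨hγK a (left_mem_Icc.mpr hab), hγK a (left_mem_Icc.mpr hab)⟩, rfl⟩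
    simpa using this
  -- part C1 : sInf Tset ≤ D / 2
  have hC1 : sInf Tset ≤ D / 2 := by
    refine le_of_forall_pos_le_add ?_
    intro ε hε
    set c : ℝ := D / 2 + ε with hc
    have hcpos : 0 < c := by positivity
    set e₀ : (Fin L → ℝ) × ℝ := (0, 1) with he₀
    set A := K + ({c • e₀} : Set ((Fin L → ℝ) × ℝ)) with hA
    set B := K + ({(-c) • e₀} : Set ((Fin L → ℝ) × ℝ)) with hB
    have hAc : IsCompact A := hKc.add isCompact_singleton
    have hBc : IsCompact B := hKc.add isCompact_singleton
    have hAconv : Convex ℝ A := hKconv.add (convex_singleton _)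
    have hBconv : Convex ℝ B := hKconv.add (convex_singleton _)
    have hdisj : Disjoint A B := by
      rw [Set.disjoint_left]
      rintro x ⟨u, hu, z1, hz1, rfl⟩ ⟨v, hv, z2, hz2, hveq⟩
      rw [Set.mem_singleton_iff] at hz1 hz2
      subst hz1; subst hz2
      have hv1 : v.1 = u.1 := by
        have := congrArg Prod.fst hveq
        simpa [he₀, Prod.fst_add] using this
      have hv2 : v.2 = u.2 + 2 * c := by
        have := congrArg Prod.snd hveq
        simp only [Prod.snd_add, Prod.smul_snd, he₀, smul_eq_mul, mul_one] at this
        linarith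
      have hmem : ((v, u) : ((Fin L → ℝ) × ℝ) × ((Fin L → ℝ) × ℝ)) ∈ SS :=
        ⟨⟨hv, hu⟩, hv1⟩
      have hthis := hmax (v, u) hmem
      rw [hv2] at hthis
      simp only at hthis
      have h2c : u.2 + 2 * c - u.2 = 2 * c := by ring
      rw [h2c, hc] at hthis
      linarith
    obtain ⟨f, s, t, hfA, hst, hfB⟩ :=
      geometric_hahn_banach_compact_closed hAconv hAc hBconv hBc.isClosed hdisj
    have key : ∀ x ∈ Set.Icc a b,
        f (γ x) + c * f e₀ < s ∧ s < f (γ x) - c * f e₀ := by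
      intro x hx
      constructor
      · have h1 := hfA (γ x + c • e₀) (Set.add_mem_add (hγK x hx) rfl)
        rwa [map_add, _root_.map_smul, smul_eq_mul] at h1
      · have h2 := hfB (γ x + (-c) • e₀) (Set.add_mem_add (hγK x hx) rfl)
        rw [map_add, _root_.map_smul, smul_eq_mul] at h2
        have := hst.trans h2
        linarith
    have hβneg : f e₀ < 0 := by
      obtain ⟨h1, h2⟩ := key a (left_mem_Icc.mpr hab)
      nlinarith
    set β := -f e₀ with hβ
    have hβpos : 0 < β := by simp [hβ]; linarith
    -- decompose f (γ x)
    set bvec : Fin L → (Fin L → ℝ) × ℝ :=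
      fun i => ((fun j => if i = j then (1 : ℝ) else 0), 0) with hbvec
    have hdec : ∀ x : ℝ,
        f (γ x) = (∑ i : Fin L, x ^ ((i : ℕ) + 1) * f (bvec i)) - β * ψ x := by
      intro x
      have h1 : γ x = (∑ i : Fin L, x ^ ((i : ℕ) + 1) • bvec i) + (ψ x) • e₀ := by
        apply Prod.ext
        · show (fun i : Fin L => x ^ ((i : ℕ) + 1))
            = ((∑ i : Fin L, x ^ ((i : ℕ) + 1) • bvec i) + (ψ x) • e₀).1
          rw [Prod.fst_add, Prod.fst_sum]
          have : (ψ x) • (e₀.1) = (0 : Fin L → ℝ) := by simp [he₀]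
          rw [show ((ψ x) • e₀).1 = (ψ x) • (e₀.1) from rfl, this, add_zero]
          funext j
          rw [Finset.sum_apply]
          have := pi_eq_sum_univ (fun i : Fin L => x ^ ((i : ℕ) + 1))
          calc x ^ ((j : ℕ) + 1)
              = ∑ i : Fin L, x ^ ((i : ℕ) + 1) * (if i = j then (1:ℝ) else 0) := by
                simp [mul_ite]
            _ = ∑ i : Fin L, (x ^ ((i : ℕ) + 1) • bvec i).1 j := by
                refine Finset.sum_congr rfl fun i _ => ?_
                show _ = x ^ ((i : ℕ) + 1) * (bvec i).1 j
                rfl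
        · show ψ x = ((∑ i : Fin L, x ^ ((i : ℕ) + 1) • bvec i) + (ψ x) • e₀).2
          rw [Prod.snd_add, Prod.snd_sum]
          have h2 : ∀ i : Fin L, (x ^ ((i : ℕ) + 1) • bvec i).2 = 0 := by
            intro i; show x ^ ((i : ℕ) + 1) * (bvec i).2 = 0; simp [hbvec]
          rw [Finset.sum_congr rfl (fun i _ => h2 i)]
          simp [he₀]
      rw [h1, map_add, map_sum, _root_.map_smul, smul_eq_mul]
      have : ∀ i : Fin L, f (x ^ ((i : ℕ) + 1) • bvec i) = x ^ ((i : ℕ) + 1) * f (bvec i) :=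
        fun i => by rw [_root_.map_smul, smul_eq_mul]
      rw [Finset.sum_congr rfl (fun i _ => this i), hβ]
      ring
    -- the polynomial
    set p : Polynomial ℝ :=
      (∑ i : Fin L, Polynomial.C (f (bvec i) / β) * Polynomial.X ^ ((i : ℕ) + 1))
        + Polynomial.C (-(s / β)) with hp
    have hpdeg : p.natDegree ≤ L := by
      refine le_trans (Polynomial.natDegree_add_le _ _) (max_le ?_ ?_)
      · refine Polynomial.natDegree_sum_le_of_forall_le _ _ fun i _ => ?_
        refine le_trans (Polynomial.natDegree_C_mul_le _ _) ?_
        rw [Polynomial.natDegree_X_pow]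
        exact i.isLt
      · simp
    have hpev : ∀ x : ℝ,
        p.eval x = ((∑ i : Fin L, x ^ ((i : ℕ) + 1) * f (bvec i)) - s) / β := by
      intro x
      rw [hp]
      simp only [Polynomial.eval_add, Polynomial.eval_finset_sum, Polynomial.eval_mul,
        Polynomial.eval_C, Polynomial.eval_pow, Polynomial.eval_X]
      rw [sub_div, Finset.sum_div, sub_eq_add_neg]
      exact congrArg₂ (· + ·) (Finset.sum_congr rfl fun i _ => by ring) rfl
    have herr : ∀ x ∈ Set.Icc a b, |p.eval x - φ x| ≤ c := by
      intro x hx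
      obtain ⟨h1, h2⟩ := key x hx
      rw [hdec x] at h1 h2
      have hfe : f e₀ = -β := by rw [hβ]; ring
      rw [hfe] at h1 h2
      set Ax := ∑ i : Fin L, x ^ ((i : ℕ) + 1) * f (bvec i) with hAx
      have h3 : Ax - β * ψ x - c * β < s := by linarith
      have h4 : s < Ax - β * ψ x + c * β := by linarith
      rw [← hψeq x hx, hpev x]
      have heq2 : (Ax - s) / β - ψ x = (Ax - s - β * ψ x) / β := by
        field_simp
      rw [heq2, abs_div, abs_of_pos hβpos, div_le_iff₀ hβpos]
      have : |Ax - s - β * ψ x| ≤ c * β := abs_le.mpr ⟨by linarith, by linarith⟩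
      linarith
    have hmem : (⨆ y : Set.Icc a b, |p.eval (y : ℝ) - φ y|) ∈ Tset := ⟨p, hpdeg, rfl⟩
    have hle : (⨆ y : Set.Icc a b, |p.eval (y : ℝ) - φ y|) ≤ c :=
      ciSup_le fun y => herr y y.2
    calc sInf Tset ≤ ⨆ y : Set.Icc a b, |p.eval (y : ℝ) - φ y| := csInf_le hTbdd hmem
      _ ≤ D / 2 + ε := by rw [← hc]; exact hle
  -- part C2 : the measures attaining D
  obtain ⟨⟨hq1K, hq2K⟩, heq12⟩ := hq₀S
  obtain ⟨μ1, hpm1, hs1, hmom1, hint1⟩ := my_hull_to_measure ψ (u := q₀.1) hq1K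
  obtain ⟨μ0, hpm0, hs0, hmom0, hint0⟩ := my_hull_to_measure ψ (u := q₀.2) hq2K
  haveI := hpm0; haveI := hpm1
  have hmomall : ∀ l : ℕ, l ≤ L → (∫ t, t ^ l ∂μ1) = ∫ t, t ^ l ∂μ0 := by
    intro l hl
    match l, hl with
    | 0, _ => simp
    | (j+1), hl =>
      have hj : j < L := by omega
      have e1 := hmom1 ⟨j, hj⟩
      have e0 := hmom0 ⟨j, hj⟩
      simp only at e1 e0
      rw [e1, e0, heq12]
  have hφψ : ∀ (μ : Measure ℝ), μ (Set.Icc a b)ᶜ = 0 →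
      ∫ t, φ t ∂μ = ∫ t, ψ t ∂μ := fun μ hs =>
    integral_congr_ae ((my_ae_mem μ hs).mono fun x hx => (hψeq x hx).symm)
  have hDx : D = (∫ t, φ t ∂μ1) - ∫ t, φ t ∂μ0 := by
    rw [hφψ μ1 hs1, hφψ μ0 hs0, hint1, hint0]
  have hDmem : D ∈ {x : ℝ | ∃ μ0 μ1 : Measure ℝ,
        IsProbabilityMeasure μ0 ∧ IsProbabilityMeasure μ1 ∧
        μ0 (Set.Icc a b)ᶜ = 0 ∧ μ1 (Set.Icc a b)ᶜ = 0 ∧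
        (∀ l : ℕ, l ≤ L → (∫ t, t ^ l ∂μ1) = ∫ t, t ^ l ∂μ0) ∧
        x = (∫ t, φ t ∂μ1) - ∫ t, φ t ∂μ0} :=
    ⟨μ0, μ1, hpm0, hpm1, hs0, hs1, hmomall, hDx⟩
  have hD2 : D ≤ 2 * sInf Tset := hub D hDmem
  have h2inf : 2 * sInf Tset = D := le_antisymm (by linarith) hD2
  constructor
  · rw [h2inf]
    exact hDmem
  · exact hub
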